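/- Under the stated assumptions, there exist constants C > 0 and R > 0 such that for every w ∈ ℂ: if Re w ≥ R then both denominators iω·sinh w + k and iω·sinh(w + 2iΦ) + k are nonzero and |Ĝ₂(w) + 2i·sin Φ| ≤ C·e^{−Re w}, and if Re w ≤ −R then both denominators are nonzero and |Ĝ₂(w) − 2i·sin Φ| ≤ C·e^{Re w}. (Asymptotics Ĝ₂(w) = ∓2i·sin Φ·(1 + O(e^{∓Re w})) as Re w → ±∞, uniformly with respect to Im w.) -/

import Mathlib

open Complex


lemma sinh_eq' (z : ℂ) : Complex.sinh z = (Complex.exp z - Complex.exp (-z)) / 2 := by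
  rw [← Complex.two_sinh]; ring

lemma key_est (ω : ℂ) (hω : ω ≠ 0) (k : ℝ) (hk : 0 < k) (a : ℝ) (w : ℂ)
    (hw : 2 + 4 * k / ‖ω‖ ≤ Real.exp w.re) :
    I * ω * Complex.sinh w + k ≠ 0 ∧
    ‖(I * ω * Complex.sinh (w + I * a) / (I * ω * Complex.sinh w + k)
        - Complex.exp (I * a))‖
      ≤ 4 * (‖ω‖ + k) / ‖ω‖ * Real.exp (-w.re) := by
  have hA0 : 0 < ‖ω‖ := norm_pos_iff.mpr hω
  have hEE' : Real.exp w.re * Real.exp (-w.re) = 1 := by rw [← Real.exp_add]; simp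
  have hE2 : 2 ≤ Real.exp w.re := by
    have : 0 < 4 * k / ‖ω‖ := by positivity
    linarith
  have hE'1 : Real.exp (-w.re) ≤ 1 := by
    nlinarith [Real.exp_pos (-w.re)]
  have hAE : 2 * ‖ω‖ + 4 * k ≤ ‖ω‖ * Real.exp w.re := by
    have h := mul_le_mul_of_nonneg_left hw (le_of_lt hA0)
    have : ‖ω‖ * (4 * k / ‖ω‖) = 4 * k := by field_simp
    nlinarith
  have hsinh : (Real.exp w.re - Real.exp (-w.re)) / 2 ≤ ‖(Complex.sinh w)‖ := by
    rw [sinh_eq', norm_div]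
    have h1 : ‖(Complex.exp w)‖ = Real.exp w.re := Complex.norm_exp w
    have h2 : ‖(Complex.exp (-w))‖ = Real.exp (-w.re) := by
      rw [Complex.norm_exp]; simp
    have h3 := norm_sub_norm_le (Complex.exp w) (Complex.exp (-w))
    rw [h1, h2] at h3
    simp only [Complex.norm_two]
    linarith
  have hDlow : ‖ω‖ * Real.exp w.re / 4 ≤ ‖(I * ω * Complex.sinh w + k)‖ := by
    have h1 : ‖(I * ω * Complex.sinh w)‖ =
        ‖ω‖ * ‖(Complex.sinh w)‖ := by
      simp [map_mul]
    have h2 : ‖(I * ω * Complex.sinh w)‖ ≤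
        ‖(I * ω * Complex.sinh w + k)‖ + k := by
      calc ‖(I * ω * Complex.sinh w)‖
          = ‖((I * ω * Complex.sinh w + k) + (-k))‖ := by ring_nf
        _ ≤ ‖(I * ω * Complex.sinh w + k)‖ + ‖(-k : ℂ)‖ :=
            norm_add_le _ _
        _ = ‖(I * ω * Complex.sinh w + k)‖ + k := by
            simp [abs_of_pos hk]
    have h3 : ‖ω‖ * ((Real.exp w.re - Real.exp (-w.re)) / 2) ≤
        ‖ω‖ * ‖(Complex.sinh w)‖ :=
      mul_le_mul_of_nonneg_left hsinh (le_of_lt hA0)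
    nlinarith
  have hDpos : 0 < ‖(I * ω * Complex.sinh w + k)‖ := by
    have : 0 < ‖ω‖ * Real.exp w.re / 4 := by positivity
    linarith
  have hD0 : I * ω * Complex.sinh w + k ≠ 0 := by
    intro h; rw [h] at hDpos; simp at hDpos
  refine ⟨hD0, ?_⟩
  have hid : I * ω * Complex.sinh (w + I * a)
      - Complex.exp (I * a) * (I * ω * Complex.sinh w + k)
      = I * ω * ((Complex.exp (I * a) - Complex.exp (-(I * a))) / 2) * Complex.exp (-w)
        - k * Complex.exp (I * a) := by
    rw [sinh_eq', sinh_eq']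
    rw [show -(w + I * ↑a) = -w + -(I * ↑a) by ring, Complex.exp_add, Complex.exp_add]
    ring
  have hnum : I * ω * Complex.sinh (w + I * a) / (I * ω * Complex.sinh w + k)
      - Complex.exp (I * a)
      = (I * ω * ((Complex.exp (I * a) - Complex.exp (-(I * a))) / 2) * Complex.exp (-w)
         - k * Complex.exp (I * a)) / (I * ω * Complex.sinh w + k) := by
    rw [← hid, eq_div_iff hD0, sub_mul, div_mul_cancel₀ _ hD0]
  rw [hnum, norm_div]
  have habsia : ‖(Complex.exp (I * a))‖ = 1 := by
    rw [Complex.norm_exp]; simp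
  have habsia' : ‖(Complex.exp (-(I * a)))‖ = 1 := by
    rw [Complex.norm_exp]; simp
  have h4 : ‖(Complex.exp (-w))‖ = Real.exp (-w.re) := by
    rw [Complex.norm_exp]; simp
  have hnumbd : ‖(I * ω * ((Complex.exp (I * a) - Complex.exp (-(I * a))) / 2)
      * Complex.exp (-w) - k * Complex.exp (I * a))‖
      ≤ ‖ω‖ * Real.exp (-w.re) + k := by
    have h2 : ‖(Complex.exp (I * a) - Complex.exp (-(I * a)))‖ ≤ 2 := by
      calc ‖(Complex.exp (I * a) - Complex.exp (-(I * a)))‖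
          ≤ ‖(Complex.exp (I * a))‖ + ‖(Complex.exp (-(I * a)))‖ :=
            norm_sub_le _ _
        _ = 2 := by rw [habsia, habsia']; norm_num
    have h1 : ‖(I * ω * ((Complex.exp (I * a) - Complex.exp (-(I * a))) / 2)
        * Complex.exp (-w))‖ ≤ ‖ω‖ * Real.exp (-w.re) := by
      rw [norm_mul, norm_mul, norm_div, h4, norm_mul, Complex.norm_I, one_mul, Complex.norm_two]
      have hd2 : ‖(Complex.exp (I * ↑a) - Complex.exp (-(I * ↑a)))‖ / 2 ≤ 1 := by
        linarith
      have hh := mul_le_mul_of_nonneg_right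
        (mul_le_mul_of_nonneg_left hd2 hA0.le) (Real.exp_pos (-w.re)).le
      simpa using hh
    have h5 : ‖((k : ℂ) * Complex.exp (I * a))‖ = k := by
      rw [norm_mul, habsia]; simp [abs_of_pos hk]
    calc ‖(I * ω * ((Complex.exp (I * a) - Complex.exp (-(I * a))) / 2)
        * Complex.exp (-w) - k * Complex.exp (I * a))‖
        ≤ ‖(I * ω * ((Complex.exp (I * a) - Complex.exp (-(I * a))) / 2)
          * Complex.exp (-w))‖ + ‖((k:ℂ) * Complex.exp (I * a))‖ :=
          norm_sub_le _ _
      _ ≤ ‖ω‖ * Real.exp (-w.re) + k := by rw [h5]; linarith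
  calc ‖(I * ω * ((Complex.exp (I * a) - Complex.exp (-(I * a))) / 2)
        * Complex.exp (-w) - k * Complex.exp (I * a))‖
        / ‖(I * ω * Complex.sinh w + k)‖
      ≤ (‖ω‖ * Real.exp (-w.re) + k) / (‖ω‖ * Real.exp w.re / 4) :=
        div_le_div₀ (by positivity) hnumbd (by positivity) hDlow
    _ ≤ 4 * (‖ω‖ + k) / ‖ω‖ * Real.exp (-w.re) := by
        rw [div_le_iff₀ (by positivity)]
        have heq : 4 * (‖ω‖ + k) / ‖ω‖ * Real.exp (-w.re)
            * (‖ω‖ * Real.exp w.re / 4)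
            = (‖ω‖ + k) * (Real.exp w.re * Real.exp (-w.re)) := by
          field_simp
        rw [heq, hEE', mul_one]
        nlinarith [Real.exp_pos (-w.re)]

lemma sinh_add_pi_I (u : ℂ) : Complex.sinh (u + ↑Real.pi * I) = -Complex.sinh u := by
  rw [Complex.sinh_add, Complex.cosh_mul_I, Complex.sinh_mul_I,
    ← Complex.ofReal_cos, ← Complex.ofReal_sin, Real.cos_pi, Real.sin_pi]
  push_cast
  ring

lemma exp_sub_sin (Φ : ℝ) :
    Complex.exp (I * Φ) - Complex.exp (-(I * Φ)) = 2 * I * Real.sin Φ := by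
  rw [show I * (Φ:ℂ) = (Φ:ℂ) * I by ring,
    show -((Φ:ℂ) * I) = ((-Φ : ℝ):ℂ) * I by push_cast; ring,
    Complex.exp_mul_I, Complex.exp_mul_I]
  push_cast
  rw [Complex.cos_neg, Complex.sin_neg, ← Complex.ofReal_sin]
  ring

theorem asymptotics_of_G2_at_infinity
    (ω : ℂ) (hω : 0 < ω.im) (k : ℝ) (hk : 0 < k)
    (Φ : ℝ) (hΦ : Real.pi < Φ ∧ Φ < 2 * Real.pi)
    (G G₂ : ℂ → ℂ)
    (hG : ∀ w : ℂ, G w = (I * ω * Complex.sinh (w - I * Φ)) / (I * ω * Complex.sinh w + k))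
    (hG₂ : ∀ w : ℂ, G₂ w = G w - G (-w + Real.pi * I - 2 * I * Φ)) :
    ∃ C > (0 : ℝ), ∃ R > (0 : ℝ), ∀ w : ℂ,
      (R ≤ w.re → (I * ω * Complex.sinh w + k ≠ 0 ∧
        I * ω * Complex.sinh (w + 2 * I * Φ) + k ≠ 0) ∧
        ‖G₂ w + 2 * I * Real.sin Φ‖ ≤ C * Real.exp (-w.re)) ∧
      (w.re ≤ -R → (I * ω * Complex.sinh w + k ≠ 0 ∧
        I * ω * Complex.sinh (w + 2 * I * Φ) + k ≠ 0) ∧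
        ‖G₂ w - 2 * I * Real.sin Φ‖ ≤ C * Real.exp w.re) := by
  have hω' : ω ≠ 0 := by
    intro h; rw [h] at hω; simp at hω
  have hωn : -ω ≠ 0 := neg_ne_zero.mpr hω'
  have hA0 : 0 < ‖ω‖ := norm_pos_iff.mpr hω'
  have habsneg : ‖(-ω)‖ = ‖ω‖ := by simp
  set M : ℝ := 2 + 4 * k / ‖ω‖ with hMdef
  have hM2 : 2 ≤ M := by
    have : 0 < 4 * k / ‖ω‖ := by positivity
    rw [hMdef]; linarith
  have hMpos : 0 < M := by linarith
  set R : ℝ := Real.log M + 1 with hRdef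
  have hR0 : 0 < R := by
    have := Real.log_nonneg (by linarith : 1 ≤ M)
    rw [hRdef]; linarith
  have hMR : ∀ r : ℝ, R ≤ r → M ≤ Real.exp r := by
    intro r hr
    have h1 : M ≤ Real.exp R := by
      rw [hRdef, Real.exp_add, Real.exp_log hMpos]
      have h1e : (1:ℝ) ≤ Real.exp 1 := by
        have := Real.add_one_le_exp (1:ℝ); linarith
      nlinarith
    exact h1.trans (Real.exp_le_exp.mpr hr)
  refine ⟨8 * (‖ω‖ + k) / ‖ω‖, by positivity, R, hR0, fun w => ⟨?_, ?_⟩⟩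
  · -- positive direction
    intro hr
    have hw1 : M ≤ Real.exp w.re := hMR _ hr
    obtain ⟨hd1, he1⟩ := key_est ω hω' k hk (-Φ) w hw1
    rw [show w + I * ((-Φ : ℝ) : ℂ) = w - I * (Φ : ℝ) by push_cast; ring,
      show I * ((-Φ : ℝ) : ℂ) = -(I * ((Φ : ℝ) : ℂ)) by push_cast; ring, ← hG w] at he1
    have hvre : (w - ↑Real.pi * I + 2 * I * ↑Φ).re = w.re := by simp
    obtain ⟨hd2, he2⟩ := key_est (-ω) hωn k hk Φ (w - ↑Real.pi * I + 2 * I * ↑Φ)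
      (by rw [habsneg, hvre]; exact hw1)
    have hident : Complex.sinh (w + 2 * I * ↑Φ)
        = -Complex.sinh (w - ↑Real.pi * I + 2 * I * ↑Φ) := by
      have h := sinh_add_pi_I (w - ↑Real.pi * I + 2 * I * ↑Φ)
      rw [show (w - ↑Real.pi * I + 2 * I * ↑Φ) + ↑Real.pi * I = w + 2 * I * ↑Φ by ring] at h
      exact h
    have hdenEq : I * (-ω) * Complex.sinh (w - ↑Real.pi * I + 2 * I * ↑Φ) + (k : ℂ)
        = I * ω * Complex.sinh (w + 2 * I * ↑Φ) + k := by
      rw [hident]; ring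
    have hGz : G (-w + ↑Real.pi * I - 2 * I * ↑Φ)
        = I * (-ω) * Complex.sinh ((w - ↑Real.pi * I + 2 * I * ↑Φ) + I * ↑Φ)
          / (I * (-ω) * Complex.sinh (w - ↑Real.pi * I + 2 * I * ↑Φ) + k) := by
      rw [hG]
      rw [show (-w + ↑Real.pi * I - 2 * I * ↑Φ) - I * ↑Φ
          = -((w - ↑Real.pi * I + 2 * I * ↑Φ) + I * ↑Φ) by ring]
      rw [show (-w + ↑Real.pi * I - 2 * I * ↑Φ)
          = -(w - ↑Real.pi * I + 2 * I * ↑Φ) by ring]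
      rw [Complex.sinh_neg, Complex.sinh_neg]
      ring
    rw [habsneg, hvre, ← hGz] at he2
    refine ⟨⟨hd1, by rw [← hdenEq]; exact hd2⟩, ?_⟩
    have hfinal : G₂ w + 2 * I * (Real.sin Φ : ℂ)
        = (G w - Complex.exp (-(I * ↑Φ)))
          - (G (-w + ↑Real.pi * I - 2 * I * ↑Φ) - Complex.exp (I * ↑Φ)) := by
      rw [hG₂ w]
      linear_combination -exp_sub_sin Φ
    rw [hfinal]
    calc ‖((G w - Complex.exp (-(I * ↑Φ)))
          - (G (-w + ↑Real.pi * I - 2 * I * ↑Φ) - Complex.exp (I * ↑Φ)))‖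
        ≤ ‖(G w - Complex.exp (-(I * ↑Φ)))‖
          + ‖(G (-w + ↑Real.pi * I - 2 * I * ↑Φ) - Complex.exp (I * ↑Φ))‖ :=
          norm_sub_le _ _
      _ ≤ 8 * (‖ω‖ + k) / ‖ω‖ * Real.exp (-w.re) := by
          have h8 : 8 * (‖ω‖ + k) / ‖ω‖ * Real.exp (-w.re)
              = 4 * (‖ω‖ + k) / ‖ω‖ * Real.exp (-w.re)
                + 4 * (‖ω‖ + k) / ‖ω‖ * Real.exp (-w.re) := by ring
          rw [h8]; exact add_le_add he1 he2
  · -- negative direction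
    intro hr
    have hw1 : M ≤ Real.exp (-w).re := by
      rw [Complex.neg_re]; exact hMR _ (by linarith)
    obtain ⟨hd1, he1⟩ := key_est (-ω) hωn k hk Φ (-w) (by rw [habsneg]; exact hw1)
    have hdeq1 : I * (-ω) * Complex.sinh (-w) + (k : ℂ) = I * ω * Complex.sinh w + k := by
      rw [Complex.sinh_neg]; ring
    have hGw : G w = I * (-ω) * Complex.sinh (-w + I * ↑Φ)
        / (I * (-ω) * Complex.sinh (-w) + k) := by
      have h1 : Complex.sinh (w - I * ↑Φ) = -Complex.sinh (-w + I * ↑Φ) := by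
        rw [show w - I * (Φ:ℂ) = -(-w + I * (Φ:ℂ)) by ring, Complex.sinh_neg]
      have h2 : Complex.sinh w = -Complex.sinh (-w) := by
        rw [Complex.sinh_neg, neg_neg]
      rw [hG, h1, h2]; ring
    rw [habsneg, Complex.neg_re, neg_neg, ← hGw] at he1
    have hzre : (-w + ↑Real.pi * I - 2 * I * ↑Φ).re = -w.re := by simp
    obtain ⟨hd2, he2⟩ := key_est ω hω' k hk (-Φ) (-w + ↑Real.pi * I - 2 * I * ↑Φ)
      (by rw [hzre]; exact hMR _ (by linarith))
    have hident : Complex.sinh (-w + ↑Real.pi * I - 2 * I * ↑Φ)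
        = Complex.sinh (w + 2 * I * ↑Φ) := by
      have h := sinh_add_pi_I (-(w + 2 * I * ↑Φ))
      rw [show -(w + 2 * I * (Φ:ℂ)) + ↑Real.pi * I
          = -w + ↑Real.pi * I - 2 * I * (Φ:ℂ) by ring, Complex.sinh_neg, neg_neg] at h
      exact h
    have hdenEq : I * ω * Complex.sinh (-w + ↑Real.pi * I - 2 * I * ↑Φ) + (k : ℂ)
        = I * ω * Complex.sinh (w + 2 * I * ↑Φ) + k := by rw [hident]
    rw [show (-w + ↑Real.pi * I - 2 * I * ↑Φ) + I * ((-Φ : ℝ) : ℂ)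
        = (-w + ↑Real.pi * I - 2 * I * ↑Φ) - I * ((Φ : ℝ) : ℂ) by push_cast; ring,
      show I * ((-Φ : ℝ) : ℂ) = -(I * ((Φ : ℝ) : ℂ)) by push_cast; ring,
      ← hG (-w + ↑Real.pi * I - 2 * I * ↑Φ), hzre, neg_neg] at he2
    refine ⟨⟨by rw [← hdeq1]; exact hd1, by rw [← hdenEq]; exact hd2⟩, ?_⟩
    have hfinal : G₂ w - 2 * I * (Real.sin Φ : ℂ)
        = (G w - Complex.exp (I * ↑Φ))
          - (G (-w + ↑Real.pi * I - 2 * I * ↑Φ) - Complex.exp (-(I * ↑Φ))) := by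
      rw [hG₂ w]
      linear_combination exp_sub_sin Φ
    rw [hfinal]
    calc ‖((G w - Complex.exp (I * ↑Φ))
          - (G (-w + ↑Real.pi * I - 2 * I * ↑Φ) - Complex.exp (-(I * ↑Φ))))‖
        ≤ ‖(G w - Complex.exp (I * ↑Φ))‖
          + ‖(G (-w + ↑Real.pi * I - 2 * I * ↑Φ) - Complex.exp (-(I * ↑Φ)))‖ :=
          norm_sub_le _ _
      _ ≤ 8 * (‖ω‖ + k) / ‖ω‖ * Real.exp w.re := by
          have h8 : 8 * (‖ω‖ + k) / ‖ω‖ * Real.exp w.re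
              = 4 * (‖ω‖ + k) / ‖ω‖ * Real.exp w.re
                + 4 * (‖ω‖ + k) / ‖ω‖ * Real.exp w.re := by ring
          rw [h8]; exact add_le_add he1 he2
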